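/- (Lie symmetry of the backward heat equation.) Let ħ > 0 and let V : ℝ³ × ℝ → ℝ be smooth. Suppose T = T(t), Q = Q(x,t) ∈ ℝ³ and φ = φ(x,t) are smooth functions satisfying the determining equations: dT/dt = 2 ∂Q_i/∂x_i for each i = 1,2,3; ∂Q_i/∂x_j + ∂Q_j/∂x_i = 0 for all i ≠ j; ∂Q_i/∂t = ∂φ/∂x_i for each i; and ∂φ/∂t + (ħ/2)Δφ = (dT/dt) V + Q·∇V + T ∂V/∂t. Define the operator Ĥ := ħ ∂/∂t + (ħ²/2)Δ − V and N := T ∂/∂t + Q·∇ − (1/ħ)φ. Then for every smooth η : ℝ³ × ℝ → ℝ with Ĥη = 0, one also has Ĥ(Nη) = 0. -/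

import Mathlib

open MeasureTheory Real Set

noncomputable section

/-- Time partial derivative of a function of space `x ∈ ℝ³` and time `t`. -/
def pt (f : (Fin 3 → ℝ) → ℝ → ℝ) (x : Fin 3 → ℝ) (t : ℝ) : ℝ := deriv (f x) t

/-- Spatial partial derivative `∂/∂x_i` of a function of space and time. -/
def pd (i : Fin 3) (f : (Fin 3 → ℝ) → ℝ → ℝ) (x : Fin 3 → ℝ) (t : ℝ) : ℝ :=
  deriv (fun s => f (Function.update x i s) t) (x i)

/-- Spatial Laplacian `Δ = Σᵢ ∂²/∂x_i²` of a function of space and time. -/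
def lap (f : (Fin 3 → ℝ) → ℝ → ℝ) (x : Fin 3 → ℝ) (t : ℝ) : ℝ := ∑ i, pd i (pd i f) x t

/-- Spatial partial derivative `∂/∂x_i` of a function of space only. -/
def pds (i : Fin 3) (f : (Fin 3 → ℝ) → ℝ) (x : Fin 3 → ℝ) : ℝ :=
  deriv (fun s => f (Function.update x i s)) (x i)

namespace LieSym

abbrev E3 : Type := (Fin 3 → ℝ) × ℝ

/-- Directional derivative operator. -/
def Dv (v : E3) (f : E3 → ℝ) (p : E3) : ℝ := fderiv ℝ f p v

/-- The time direction. -/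
def vT : E3 := ((0 : Fin 3 → ℝ), (1 : ℝ))

/-- The `i`-th spatial direction. -/
def vX (i : Fin 3) : E3 := (Pi.single i (1:ℝ), (0:ℝ))

theorem vT_snd : vT.2 = 1 := rfl
theorem vX_snd (i : Fin 3) : (vX i).2 = 0 := rfl

theorem le1' : (1 : WithTop ℕ∞) ≤ ((⊤:ℕ∞) : WithTop ℕ∞) := by exact_mod_cast le_top
theorem leD' : ((⊤:ℕ∞) : WithTop ℕ∞) + 1 ≤ ((⊤:ℕ∞) : WithTop ℕ∞) := by exact_mod_cast le_top

theorem diffble {f : E3 → ℝ} (hf : ContDiff ℝ (⊤:ℕ∞) f) : Differentiable ℝ f :=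
  hf.differentiable (lt_of_lt_of_le zero_lt_one le1').ne'

@[fun_prop]
theorem contDiff_Dv (v : E3) {f : E3 → ℝ} (hf : ContDiff ℝ (⊤:ℕ∞) f) :
    ContDiff ℝ (⊤:ℕ∞) (Dv v f) := by
  have h1 : ContDiff ℝ (⊤:ℕ∞) (fderiv ℝ f) := hf.fderiv_right leD'
  exact (ContinuousLinearMap.apply ℝ ℝ v).contDiff.comp h1

theorem Dv_add {f g : E3 → ℝ} (hf : ContDiff ℝ (⊤:ℕ∞) f) (hg : ContDiff ℝ (⊤:ℕ∞) g)
    (v : E3) (p : E3) :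
    Dv v (fun q => f q + g q) p = Dv v f p + Dv v g p := by
  unfold Dv; rw [fderiv_fun_add (diffble hf p) (diffble hg p)]; rfl

theorem Dv_sub {f g : E3 → ℝ} (hf : ContDiff ℝ (⊤:ℕ∞) f) (hg : ContDiff ℝ (⊤:ℕ∞) g)
    (v : E3) (p : E3) :
    Dv v (fun q => f q - g q) p = Dv v f p - Dv v g p := by
  unfold Dv; rw [fderiv_fun_sub (diffble hf p) (diffble hg p)]; rfl

theorem Dv_mul {f g : E3 → ℝ} (hf : ContDiff ℝ (⊤:ℕ∞) f) (hg : ContDiff ℝ (⊤:ℕ∞) g)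
    (v : E3) (p : E3) :
    Dv v (fun q => f q * g q) p = Dv v f p * g p + f p * Dv v g p := by
  unfold Dv; rw [fderiv_fun_mul (diffble hf p) (diffble hg p)]
  simp only [ContinuousLinearMap.add_apply, ContinuousLinearMap.smul_apply, smul_eq_mul]; ring

theorem Dv_const_mul {f : E3 → ℝ} (hf : ContDiff ℝ (⊤:ℕ∞) f) (c : ℝ) (v : E3) (p : E3) :
    Dv v (fun q => c * f q) p = c * Dv v f p := by
  unfold Dv; rw [fderiv_const_mul (diffble hf p)]; rfl

theorem Dv_snd {g : ℝ → ℝ} (hg : ContDiff ℝ (⊤:ℕ∞) g) (v : E3) (p : E3) :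
    Dv v (fun q => g q.2) p = deriv g p.2 * v.2 := by
  have h1 : HasDerivAt g (deriv g p.2) p.2 := ((hg.differentiable (lt_of_lt_of_le zero_lt_one le1').ne') p.2).hasDerivAt
  have h2 : HasFDerivAt (fun q : E3 => g q.2)
      (deriv g p.2 • ContinuousLinearMap.snd ℝ (Fin 3 → ℝ) ℝ) p :=
    h1.comp_hasFDerivAt p hasFDerivAt_snd
  unfold Dv; rw [h2.fderiv]; simp [mul_comm]

theorem Dv_add' {f g : E3 → ℝ} (hf : ContDiff ℝ (⊤:ℕ∞) f) (hg : ContDiff ℝ (⊤:ℕ∞) g) (v : E3) :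
    Dv v (fun q => f q + g q) = fun p => Dv v f p + Dv v g p := funext (Dv_add hf hg v)
theorem Dv_sub' {f g : E3 → ℝ} (hf : ContDiff ℝ (⊤:ℕ∞) f) (hg : ContDiff ℝ (⊤:ℕ∞) g) (v : E3) :
    Dv v (fun q => f q - g q) = fun p => Dv v f p - Dv v g p := funext (Dv_sub hf hg v)
theorem Dv_mul' {f g : E3 → ℝ} (hf : ContDiff ℝ (⊤:ℕ∞) f) (hg : ContDiff ℝ (⊤:ℕ∞) g) (v : E3) :
    Dv v (fun q => f q * g q) = fun p => Dv v f p * g p + f p * Dv v g p := funext (Dv_mul hf hg v)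
theorem Dv_const_mul' {f : E3 → ℝ} (hf : ContDiff ℝ (⊤:ℕ∞) f) (c : ℝ) (v : E3) :
    Dv v (fun q => c * f q) = fun p => c * Dv v f p := funext (Dv_const_mul hf c v)
theorem Dv_snd' {g : ℝ → ℝ} (hg : ContDiff ℝ (⊤:ℕ∞) g) (v : E3) :
    Dv v (fun q => g q.2) = fun p => deriv g p.2 * v.2 := funext (Dv_snd hg v)
theorem Dv_const' (c : ℝ) (v : E3) : Dv v (fun _ : E3 => c) = fun _ => (0:ℝ) :=
  funext fun p => by simp [Dv]

theorem Dv_comm {f : E3 → ℝ} (hf : ContDiff ℝ (⊤:ℕ∞) f) (v w : E3) (p : E3) :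
    Dv v (Dv w f) p = Dv w (Dv v f) p := by
  have hd : ∀ y, HasFDerivAt f (fderiv ℝ f y) y := fun y => (diffble hf y).hasFDerivAt
  have h1 : ContDiff ℝ (⊤:ℕ∞) (fderiv ℝ f) := hf.fderiv_right leD'
  have h2 : HasFDerivAt (fderiv ℝ f) (fderiv ℝ (fderiv ℝ f) p) p := (by
    have : Differentiable ℝ (fderiv ℝ f) := h1.differentiable (lt_of_lt_of_le zero_lt_one le1').ne'
    exact (this p).hasFDerivAt)
  have key : ∀ a b : E3, Dv a (Dv b f) p = fderiv ℝ (fderiv ℝ f) p a b := by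
    intro a b
    have hc : HasFDerivAt (Dv b f)
        ((ContinuousLinearMap.apply ℝ ℝ b).comp (fderiv ℝ (fderiv ℝ f) p)) p :=
      (ContinuousLinearMap.apply ℝ ℝ b).hasFDerivAt.comp p h2
    show fderiv ℝ (Dv b f) p a = fderiv ℝ (fderiv ℝ f) p a b
    rw [hc.fderiv]
    rfl
  rw [key v w, key w v]
  exact second_derivative_symmetric hd h2 v w

theorem Dv_comm_fun {f : E3 → ℝ} (hf : ContDiff ℝ (⊤:ℕ∞) f) (v w : E3) :
    Dv v (Dv w f) = Dv w (Dv v f) := funext (Dv_comm hf v w)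

theorem pt_eq {f : (Fin 3 → ℝ) → ℝ → ℝ} {G : E3 → ℝ} (hG : ContDiff ℝ (⊤:ℕ∞) G)
    (heq : ∀ y s, f y s = G (y, s)) (x : Fin 3 → ℝ) (t : ℝ) :
    pt f x t = Dv vT G (x, t) := by
  have h1 : HasDerivAt (fun s : ℝ => ((x, s) : E3)) (((0 : Fin 3 → ℝ), (1:ℝ)) : E3) t :=
    (hasDerivAt_const t x).prodMk (hasDerivAt_id t)
  have h2 : HasDerivAt (fun s => G (x, s)) (Dv vT G (x, t)) t :=
    ((diffble hG (x, t)).hasFDerivAt).comp_hasDerivAt t h1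
  have h3 : f x = fun s => G (x, s) := funext (fun s => heq x s)
  rw [pt, h3, h2.deriv]

theorem pd_eq {f : (Fin 3 → ℝ) → ℝ → ℝ} {G : E3 → ℝ} (hG : ContDiff ℝ (⊤:ℕ∞) G)
    (heq : ∀ y s, f y s = G (y, s)) (i : Fin 3) (x : Fin 3 → ℝ) (t : ℝ) :
    pd i f x t = Dv (vX i) G (x, t) := by
  have h1 : HasDerivAt (fun s : ℝ => ((Function.update x i s, t) : E3))
      ((Pi.single i (1:ℝ), (0:ℝ)) : E3) (x i) :=
    (hasDerivAt_update x i (x i)).prodMk (hasDerivAt_const (x i) t)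
  have h2 : HasDerivAt (fun s => G (Function.update x i s, t)) (Dv (vX i) G (x, t)) (x i) := by
    have := ((diffble hG ((Function.update x i (x i), t) : E3)).hasFDerivAt).comp_hasDerivAt
      (x i) h1
    rw [Function.update_eq_self] at this
    exact this
  have h3 : (fun s => f (Function.update x i s) t) = fun s => G (Function.update x i s, t) :=
    funext (fun s => heq _ t)
  rw [pd, h3, h2.deriv]

end LieSym

open LieSym

set_option maxHeartbeats 4000000 in
/-- **Lie symmetry of the backward heat equation.**  If `(T, Q, φ)` solve the determining
equations, then the operator `N = T ∂/∂t + Q·∇ − (1/ħ)φ` maps solutions of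
`Ĥη = ħ∂η/∂t + (ħ²/2)Δη − Vη = 0` to solutions: `Ĥη = 0 ⟹ Ĥ(Nη) = 0`. -/
theorem lie_symmetry_backward_heat_equation
    (hbar : ℝ) (hhbar : 0 < hbar)
    (V : (Fin 3 → ℝ) → ℝ → ℝ)
    (hV : ContDiff ℝ (⊤ : ℕ∞) (fun p : (Fin 3 → ℝ) × ℝ => V p.1 p.2))
    (T : ℝ → ℝ) (hT : ContDiff ℝ (⊤ : ℕ∞) T)
    (Q : (Fin 3 → ℝ) → ℝ → Fin 3 → ℝ)
    (hQ : ContDiff ℝ (⊤ : ℕ∞) (fun p : (Fin 3 → ℝ) × ℝ => Q p.1 p.2))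
    (φ : (Fin 3 → ℝ) → ℝ → ℝ)
    (hφ : ContDiff ℝ (⊤ : ℕ∞) (fun p : (Fin 3 → ℝ) × ℝ => φ p.1 p.2))
    (hdet1 : ∀ x t (i : Fin 3), deriv T t = 2 * pd i (fun y s => Q y s i) x t)
    (hdet2 : ∀ x t (i j : Fin 3), i ≠ j →
      pd j (fun y s => Q y s i) x t + pd i (fun y s => Q y s j) x t = 0)
    (hdet3 : ∀ x t (i : Fin 3), pt (fun y s => Q y s i) x t = pd i φ x t)
    (hdet4 : ∀ x t,
      pt φ x t + (hbar / 2) * lap φ x t =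
        deriv T t * V x t + (∑ i, Q x t i * pd i V x t) + T t * pt V x t)
    -- the operators Ĥ and N
    (Hhat N : ((Fin 3 → ℝ) → ℝ → ℝ) → (Fin 3 → ℝ) → ℝ → ℝ)
    (hHhat : ∀ f x t,
      Hhat f x t = hbar * pt f x t + (hbar ^ 2 / 2) * lap f x t - V x t * f x t)
    (hN : ∀ f x t,
      N f x t = T t * pt f x t + (∑ i, Q x t i * pd i f x t) - (1 / hbar) * φ x t * f x t) :
    ∀ η : (Fin 3 → ℝ) → ℝ → ℝ,
      ContDiff ℝ (⊤ : ℕ∞) (fun p : (Fin 3 → ℝ) × ℝ => η p.1 p.2) →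
      (∀ x t, Hhat η x t = 0) →
      (∀ x t, Hhat (N η) x t = 0) := by
  intro η hη hHη x t
  have hbar0 : hbar ≠ 0 := ne_of_gt hhbar
  have hT' : ContDiff ℝ (⊤:ℕ∞) (deriv T) := (contDiff_infty_iff_deriv.1 hT).2
  have hQc : ∀ j : Fin 3, ContDiff ℝ (⊤:ℕ∞) (fun q : E3 => Q q.1 q.2 j) :=
    fun j => contDiff_pi.1 hQ j
  have c1 : ∀ (i : Fin 3) (q : E3),
      Dv vT (Dv (vX i) (Dv (vX i) (fun q : E3 => η q.1 q.2))) q = Dv (vX i) (Dv (vX i) (Dv vT (fun q : E3 => η q.1 q.2))) q := by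
    intro i q
    rw [Dv_comm (contDiff_Dv (vX i) hη) vT (vX i) q, Dv_comm_fun hη vT (vX i)]
  have c2 : ∀ (i j : Fin 3) (q : E3),
      Dv (vX j) (Dv (vX i) (Dv (vX i) (fun q : E3 => η q.1 q.2))) q = Dv (vX i) (Dv (vX i) (Dv (vX j) (fun q : E3 => η q.1 q.2))) q := by
    intro i j q
    rw [Dv_comm (contDiff_Dv (vX i) hη) (vX j) (vX i) q, Dv_comm_fun hη (vX j) (vX i)]
  have c3 : ∀ (j : Fin 3) (q : E3),
      Dv vT (Dv (vX j) (fun q : E3 => η q.1 q.2)) q = Dv (vX j) (Dv vT (fun q : E3 => η q.1 q.2)) q := fun j q => Dv_comm hη vT (vX j) q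
  have c401 : ∀ q : E3, Dv (vX 1) (Dv (vX 0) (fun q : E3 => η q.1 q.2)) q = Dv (vX 0) (Dv (vX 1) (fun q : E3 => η q.1 q.2)) q :=
    fun q => Dv_comm hη (vX 1) (vX 0) q
  have c402 : ∀ q : E3, Dv (vX 2) (Dv (vX 0) (fun q : E3 => η q.1 q.2)) q = Dv (vX 0) (Dv (vX 2) (fun q : E3 => η q.1 q.2)) q :=
    fun q => Dv_comm hη (vX 2) (vX 0) q
  have c412 : ∀ q : E3, Dv (vX 2) (Dv (vX 1) (fun q : E3 => η q.1 q.2)) q = Dv (vX 1) (Dv (vX 2) (fun q : E3 => η q.1 q.2)) q :=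
    fun q => Dv_comm hη (vX 2) (vX 1) q
  have hdet1p : ∀ (i : Fin 3) (q : E3), deriv T q.2 = 2 * Dv (vX i) (fun r : E3 => Q r.1 r.2 i) q := by
    intro i q
    have h1 := hdet1 q.1 q.2 i
    rw [pd_eq (hQc i) (fun _ _ => rfl) i q.1 q.2] at h1
    exact h1
  have hQd : ∀ (i j : Fin 3) (q : E3),
      Dv (vX j) (Dv (vX i) (fun r : E3 => Q r.1 r.2 i)) q = 0 := by
    intro i j q
    have hfun1 : (fun q : E3 => deriv T q.2 - 2 * Dv (vX i) (fun r : E3 => Q r.1 r.2 i) q)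
        = (fun _ : E3 => (0:ℝ)) := funext fun q => by rw [hdet1p i q]; ring
    have h2 : Dv (vX j) (fun q : E3 => deriv T q.2 - 2 * Dv (vX i) (fun r : E3 => Q r.1 r.2 i) q) q = 0 := by
      rw [hfun1]; simp [Dv]
    simp (disch := fun_prop) only [Dv_add', Dv_sub', Dv_mul', Dv_const_mul', Dv_snd', Dv_const', vT_snd, vX_snd, deriv_const', mul_zero, zero_mul, mul_one, one_mul, add_zero, zero_add, sub_zero, zero_sub, neg_zero, neg_neg] at h2
    linarith
  have hQdd : ∀ (j i : Fin 3) (q : E3),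
      Dv (vX i) (Dv (vX i) (fun r : E3 => Q r.1 r.2 j)) q = 0 := by
    intro j i q
    by_cases hij : i = j
    · subst hij; exact hQd i i q
    · have hd2p : ∀ r : E3, Dv (vX i) (fun s : E3 => Q s.1 s.2 j) r
          + Dv (vX j) (fun s : E3 => Q s.1 s.2 i) r = 0 := by
        intro r
        have h1 := hdet2 r.1 r.2 j i (fun h => hij (h.symm))
        rw [pd_eq (hQc j) (fun _ _ => rfl) i r.1 r.2,
            pd_eq (hQc i) (fun _ _ => rfl) j r.1 r.2] at h1
        exact h1
      have hfun2 : (fun r : E3 => Dv (vX i) (fun s : E3 => Q s.1 s.2 j) r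
          + Dv (vX j) (fun s : E3 => Q s.1 s.2 i) r) = (fun _ : E3 => (0:ℝ)) := funext hd2p
      have h2 : Dv (vX i) (fun r : E3 => Dv (vX i) (fun s : E3 => Q s.1 s.2 j) r
          + Dv (vX j) (fun s : E3 => Q s.1 s.2 i) r) q = 0 := by
        rw [hfun2]; simp [Dv]
      rw [Dv_add (contDiff_Dv (vX i) (hQc j)) (contDiff_Dv (vX j) (hQc i)) (vX i) q] at h2
      rw [Dv_comm (hQc i) (vX i) (vX j) q, hQd i j q] at h2
      linarith
  have hEEp : ∀ q : E3, hbar * Dv vT (fun q : E3 => η q.1 q.2) q + hbar ^ 2 / 2 * (Dv (vX 0) (Dv (vX 0) (fun q : E3 => η q.1 q.2)) q + Dv (vX 1) (Dv (vX 1) (fun q : E3 => η q.1 q.2)) q + Dv (vX 2) (Dv (vX 2) (fun q : E3 => η q.1 q.2)) q) - V q.1 q.2 * η q.1 q.2 = 0 := by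
    intro q
    have h1 := hHη q.1 q.2
    rw [hHhat] at h1
    simp only [lap, Fin.sum_univ_three] at h1
    rw [pt_eq hη (fun _ _ => rfl) q.1 q.2,
        pd_eq (contDiff_Dv (vX 0) hη) (fun y s => pd_eq hη (fun _ _ => rfl) 0 y s) 0 q.1 q.2,
        pd_eq (contDiff_Dv (vX 1) hη) (fun y s => pd_eq hη (fun _ _ => rfl) 1 y s) 1 q.1 q.2,
        pd_eq (contDiff_Dv (vX 2) hη) (fun y s => pd_eq hη (fun _ _ => rfl) 2 y s) 2 q.1 q.2] at h1
    exact h1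
  have hEfun : (fun q : E3 => hbar * Dv vT (fun q : E3 => η q.1 q.2) q + hbar ^ 2 / 2 * (Dv (vX 0) (Dv (vX 0) (fun q : E3 => η q.1 q.2)) q + Dv (vX 1) (Dv (vX 1) (fun q : E3 => η q.1 q.2)) q + Dv (vX 2) (Dv (vX 2) (fun q : E3 => η q.1 q.2)) q) - V q.1 q.2 * η q.1 q.2) = (fun _ : E3 => (0:ℝ)) := funext hEEp
  have hED : ∀ (v : E3) (q : E3), Dv v (fun q : E3 => hbar * Dv vT (fun q : E3 => η q.1 q.2) q + hbar ^ 2 / 2 * (Dv (vX 0) (Dv (vX 0) (fun q : E3 => η q.1 q.2)) q + Dv (vX 1) (Dv (vX 1) (fun q : E3 => η q.1 q.2)) q + Dv (vX 2) (Dv (vX 2) (fun q : E3 => η q.1 q.2)) q) - V q.1 q.2 * η q.1 q.2) q = 0 := by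
    intro v q
    rw [hEfun]; simp [Dv]
  have hE0 : hbar * Dv vT (fun q : E3 => η q.1 q.2) (x, t) + hbar ^ 2 / 2 * (Dv (vX 0) (Dv (vX 0) (fun q : E3 => η q.1 q.2)) (x, t) + Dv (vX 1) (Dv (vX 1) (fun q : E3 => η q.1 q.2)) (x, t) + Dv (vX 2) (Dv (vX 2) (fun q : E3 => η q.1 q.2)) (x, t)) - V x t * η x t = 0 := hEEp (x, t)
  have h3 := hED vT (x, t)
  simp (disch := fun_prop) only [Dv_add', Dv_sub', Dv_mul', Dv_const_mul', Dv_snd', Dv_const', vT_snd, vX_snd, deriv_const', mul_zero, zero_mul, mul_one, one_mul, add_zero, zero_add, sub_zero, zero_sub, neg_zero, neg_neg] at h3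
  rw [c1 0 (x, t), c1 1 (x, t), c1 2 (x, t)] at h3
  have h40 := hED (vX 0) (x, t)
  simp (disch := fun_prop) only [Dv_add', Dv_sub', Dv_mul', Dv_const_mul', Dv_snd', Dv_const', vT_snd, vX_snd, deriv_const', mul_zero, zero_mul, mul_one, one_mul, add_zero, zero_add, sub_zero, zero_sub, neg_zero, neg_neg] at h40
  rw [c2 1 0 (x, t), c2 2 0 (x, t)] at h40
  have h41 := hED (vX 1) (x, t)
  simp (disch := fun_prop) only [Dv_add', Dv_sub', Dv_mul', Dv_const_mul', Dv_snd', Dv_const', vT_snd, vX_snd, deriv_const', mul_zero, zero_mul, mul_one, one_mul, add_zero, zero_add, sub_zero, zero_sub, neg_zero, neg_neg] at h41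
  rw [c2 0 1 (x, t), c2 2 1 (x, t)] at h41
  have h42 := hED (vX 2) (x, t)
  simp (disch := fun_prop) only [Dv_add', Dv_sub', Dv_mul', Dv_const_mul', Dv_snd', Dv_const', vT_snd, vX_snd, deriv_const', mul_zero, zero_mul, mul_one, one_mul, add_zero, zero_add, sub_zero, zero_sub, neg_zero, neg_neg] at h42
  rw [c2 0 2 (x, t), c2 1 2 (x, t)] at h42
  have hd1 : ∀ i : Fin 3, deriv T t = 2 * Dv (vX i) (fun r : E3 => Q r.1 r.2 i) (x, t) :=
    fun i => hdet1p i (x, t)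
  have hd3 : ∀ j : Fin 3, Dv vT (fun r : E3 => Q r.1 r.2 j) (x, t) = Dv (vX j) (fun q : E3 => φ q.1 q.2) (x, t) := by
    intro j
    have h1 := hdet3 x t j
    rw [pt_eq (hQc j) (fun _ _ => rfl) x t, pd_eq hφ (fun _ _ => rfl) j x t] at h1
    exact h1
  have hd2_01 : Dv (vX 1) (fun q : E3 => Q q.1 q.2 0) (x, t) + Dv (vX 0) (fun q : E3 => Q q.1 q.2 1) (x, t) = 0 := by
    have h1 := hdet2 x t 0 1 (by decide)
    rw [pd_eq (hQc 0) (fun _ _ => rfl) 1 x t, pd_eq (hQc 1) (fun _ _ => rfl) 0 x t] at h1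
    exact h1
  have hd2_02 : Dv (vX 2) (fun q : E3 => Q q.1 q.2 0) (x, t) + Dv (vX 0) (fun q : E3 => Q q.1 q.2 2) (x, t) = 0 := by
    have h1 := hdet2 x t 0 2 (by decide)
    rw [pd_eq (hQc 0) (fun _ _ => rfl) 2 x t, pd_eq (hQc 2) (fun _ _ => rfl) 0 x t] at h1
    exact h1
  have hd2_12 : Dv (vX 2) (fun q : E3 => Q q.1 q.2 1) (x, t) + Dv (vX 1) (fun q : E3 => Q q.1 q.2 2) (x, t) = 0 := by
    have h1 := hdet2 x t 1 2 (by decide)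
    rw [pd_eq (hQc 1) (fun _ _ => rfl) 2 x t, pd_eq (hQc 2) (fun _ _ => rfl) 1 x t] at h1
    exact h1
  have hd4 : Dv vT (fun q : E3 => φ q.1 q.2) (x, t) + hbar / 2 *
        (Dv (vX 0) (Dv (vX 0) (fun q : E3 => φ q.1 q.2)) (x, t) + Dv (vX 1) (Dv (vX 1) (fun q : E3 => φ q.1 q.2)) (x, t)
          + Dv (vX 2) (Dv (vX 2) (fun q : E3 => φ q.1 q.2)) (x, t)) =
      deriv T t * V x t + (Q x t 0 * Dv (vX 0) (fun q : E3 => V q.1 q.2) (x, t) + Q x t 1 * Dv (vX 1) (fun q : E3 => V q.1 q.2) (x, t)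
        + Q x t 2 * Dv (vX 2) (fun q : E3 => V q.1 q.2) (x, t)) + T t * Dv vT (fun q : E3 => V q.1 q.2) (x, t) := by
    have h1 := hdet4 x t
    simp only [lap, Fin.sum_univ_three] at h1
    rw [pt_eq hφ (fun _ _ => rfl) x t,
        pd_eq (contDiff_Dv (vX 0) hφ) (fun y s => pd_eq hφ (fun _ _ => rfl) 0 y s) 0 x t,
        pd_eq (contDiff_Dv (vX 1) hφ) (fun y s => pd_eq hφ (fun _ _ => rfl) 1 y s) 1 x t,
        pd_eq (contDiff_Dv (vX 2) hφ) (fun y s => pd_eq hφ (fun _ _ => rfl) 2 y s) 2 x t,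
        pd_eq hV (fun _ _ => rfl) 0 x t, pd_eq hV (fun _ _ => rfl) 1 x t,
        pd_eq hV (fun _ _ => rfl) 2 x t, pt_eq hV (fun _ _ => rfl) x t] at h1
    exact h1
  have hG : ContDiff ℝ (⊤:ℕ∞) (fun q : E3 => T q.2 * Dv vT (fun q : E3 => η q.1 q.2) q + (Q q.1 q.2 0 * Dv (vX 0) (fun q : E3 => η q.1 q.2) q + Q q.1 q.2 1 * Dv (vX 1) (fun q : E3 => η q.1 q.2) q + Q q.1 q.2 2 * Dv (vX 2) (fun q : E3 => η q.1 q.2) q) - 1 / hbar * φ q.1 q.2 * η q.1 q.2) := by fun_prop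
  have hNG : ∀ y s, N η y s = (fun q : E3 => T q.2 * Dv vT (fun q : E3 => η q.1 q.2) q + (Q q.1 q.2 0 * Dv (vX 0) (fun q : E3 => η q.1 q.2) q + Q q.1 q.2 1 * Dv (vX 1) (fun q : E3 => η q.1 q.2) q + Q q.1 q.2 2 * Dv (vX 2) (fun q : E3 => η q.1 q.2) q) - 1 / hbar * φ q.1 q.2 * η q.1 q.2) (y, s) := by
    intro y s
    rw [hN, Fin.sum_univ_three, pt_eq hη (fun _ _ => rfl) y s,
        pd_eq hη (fun _ _ => rfl) 0 y s, pd_eq hη (fun _ _ => rfl) 1 y s,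
        pd_eq hη (fun _ _ => rfl) 2 y s]
  rw [hHhat]
  simp only [lap, Fin.sum_univ_three]
  rw [pt_eq hG hNG x t,
      pd_eq (contDiff_Dv (vX 0) hG) (fun y s => pd_eq hG hNG 0 y s) 0 x t,
      pd_eq (contDiff_Dv (vX 1) hG) (fun y s => pd_eq hG hNG 1 y s) 1 x t,
      pd_eq (contDiff_Dv (vX 2) hG) (fun y s => pd_eq hG hNG 2 y s) 2 x t,
      hNG x t]
  simp (disch := fun_prop) only [Dv_add', Dv_sub', Dv_mul', Dv_const_mul', Dv_snd', Dv_const', vT_snd, vX_snd, deriv_const', mul_zero, zero_mul, mul_one, one_mul, add_zero, zero_add, sub_zero, zero_sub, neg_zero, neg_neg]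
  rw [c3 0 (x, t), c3 1 (x, t), c3 2 (x, t), c401 (x, t), c402 (x, t), c412 (x, t)]
  linear_combination (norm := (field_simp; ring1))
    T t * h3 + Q x t 0 * h40 + Q x t 1 * h41 + Q x t 2 * h42
    + (deriv T t - φ x t / hbar) * hE0
    + hbar * (Dv (vX 0) (fun q : E3 => η q.1 q.2) (x, t) * hd3 0 + Dv (vX 1) (fun q : E3 => η q.1 q.2) (x, t) * hd3 1 + Dv (vX 2) (fun q : E3 => η q.1 q.2) (x, t) * hd3 2)
    + hbar ^ 2 * (Dv (vX 0) (Dv (vX 1) (fun q : E3 => η q.1 q.2)) (x, t) * hd2_01 + Dv (vX 0) (Dv (vX 2) (fun q : E3 => η q.1 q.2)) (x, t) * hd2_02 + Dv (vX 1) (Dv (vX 2) (fun q : E3 => η q.1 q.2)) (x, t) * hd2_12)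
    - hbar ^ 2 / 2 * (Dv (vX 0) (Dv (vX 0) (fun q : E3 => η q.1 q.2)) (x, t) * hd1 0 + Dv (vX 1) (Dv (vX 1) (fun q : E3 => η q.1 q.2)) (x, t) * hd1 1 + Dv (vX 2) (Dv (vX 2) (fun q : E3 => η q.1 q.2)) (x, t) * hd1 2)
    + hbar ^ 2 / 2 * (Dv (vX 0) (fun q : E3 => η q.1 q.2) (x, t) * hQdd 0 0 (x, t) + Dv (vX 0) (fun q : E3 => η q.1 q.2) (x, t) * hQdd 0 1 (x, t) + Dv (vX 0) (fun q : E3 => η q.1 q.2) (x, t) * hQdd 0 2 (x, t) + Dv (vX 1) (fun q : E3 => η q.1 q.2) (x, t) * hQdd 1 0 (x, t) + Dv (vX 1) (fun q : E3 => η q.1 q.2) (x, t) * hQdd 1 1 (x, t) + Dv (vX 1) (fun q : E3 => η q.1 q.2) (x, t) * hQdd 1 2 (x, t) + Dv (vX 2) (fun q : E3 => η q.1 q.2) (x, t) * hQdd 2 0 (x, t) + Dv (vX 2) (fun q : E3 => η q.1 q.2) (x, t) * hQdd 2 1 (x, t) + Dv (vX 2) (fun q : E3 => η q.1 q.2) (x,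 t) * hQdd 2 2 (x, t))
    - η x t * hd4
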